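/- For the pigeonhole search problem PH_n (with n ≥ 4 a power of 2), the classical adversary bound satisfies CAdv(PH_n) ≤ 2·log₂(n/2). Concretely: assigning weight m_x(i) = 2/n to every input x and every bit position i ∈ [n·log₂(n/2)] gives a feasible solution to the CAdv minimization problem with objective value 2·log₂(n/2). -/

import Mathlib

open scoped Classical

/-- Feasibility of the constant weight scheme `m_x(i) = 2/n` for the classical adversary
bound of the pigeonhole problem `PH_n` (`n = 2^k ≥ 4`, blocks of `log₂(n/2) = k-1` bits):
the objective value is `2·log₂(n/2) = 2(k-1)`, and for every pair of inputs with disjoint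
certificate sets the feasibility constraint holds.  Hence `CAdv(PH_n) ≤ 2·log₂(n/2)`. -/
theorem stmt_8 (k n : ℕ) (hk : 2 ≤ k) (hn : n = 2 ^ k) :
    (∀ _x : Fin n → Fin (k - 1) → Bool,
        ∑ _p : Fin n × Fin (k - 1), (2 / (n : ℝ)) ≤ 2 * ((k : ℝ) - 1)) ∧
    (∀ x y : Fin n → Fin (k - 1) → Bool,
        (¬ ∃ i j : Fin n, i ≠ j ∧ x i = x j ∧ x i = y i ∧ x j = y j) →
        1 ≤ ∑ _p ∈ Finset.univ.filter
              (fun p : Fin n × Fin (k - 1) => x p.1 p.2 ≠ y p.1 p.2),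
              min (2 / (n : ℝ)) (2 / (n : ℝ))) := by
  have hn0 : 0 < n := by rw [hn]; positivity
  have hnR : (0:ℝ) < (n:ℝ) := by exact_mod_cast hn0
  constructor
  · intro _x
    rw [Finset.sum_const, Finset.card_univ, Fintype.card_prod, Fintype.card_fin,
      Fintype.card_fin]
    rw [nsmul_eq_mul]
    have hk1 : (1:ℝ) ≤ (k:ℝ) := by exact_mod_cast Nat.one_le_of_lt hk
    have hcast : ((k - 1 : ℕ) : ℝ) = (k:ℝ) - 1 := by
      have : 1 ≤ k := Nat.one_le_of_lt hk
      push_cast [this]; ring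
    have : ((n * (k-1) : ℕ) : ℝ) * (2 / n) = 2 * ((k:ℝ) - 1) := by
      push_cast [hcast]
      field_simp
    rw [this]
  · intro x y hdisj
    -- the set of agreeing blocks has size ≤ 2^(k-1)
    set S : Finset (Fin n) := Finset.univ.filter (fun i => x i = y i) with hS
    have hScard : S.card ≤ 2 ^ (k - 1) := by
      by_contra h
      push_neg at h
      have hmap : ∀ i ∈ S, x i ∈ (Finset.univ : Finset (Fin (k-1) → Bool)) := by
        intro i _; exact Finset.mem_univ _
      have hcardcod : (Finset.univ : Finset (Fin (k-1) → Bool)).card = 2 ^ (k-1) := by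
        simp [Finset.card_univ]
      obtain ⟨i, hi, j, hj, hij, heq⟩ :=
        Finset.exists_ne_map_eq_of_card_lt_of_maps_to (by rw [hcardcod]; exact h) hmap
      have hxi : x i = y i := (Finset.mem_filter.mp hi).2
      have hxj : x j = y j := (Finset.mem_filter.mp hj).2
      exact hdisj ⟨i, j, hij, heq, hxi, hxj⟩
    -- the set of differing positions has size ≥ 2^(k-1)
    set T : Finset (Fin n × Fin (k-1)) :=
      Finset.univ.filter (fun p : Fin n × Fin (k-1) => x p.1 p.2 ≠ y p.1 p.2) with hT
    have hSc : Sᶜ.card = n - S.card := by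
      rw [Finset.card_compl, Fintype.card_fin]
    have hhalf : 2 ^ (k-1) ≤ Sᶜ.card := by
      rw [hSc]
      have : 2 ^ (k-1) + 2 ^ (k-1) = n := by
        rw [hn, ← two_mul, ← pow_succ']
        congr 1
        omega
      omega
    have hTcard : 2 ^ (k-1) ≤ T.card := by
      refine le_trans hhalf ?_
      -- injection from Sᶜ into T: pick a differing coordinate
      have hex : ∀ i ∈ Sᶜ, ∃ j : Fin (k-1), x i j ≠ y i j := by
        intro i hi
        have : ¬ (x i = y i) := by
          simpa [hS] using hi
        by_contra h
        push_neg at h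
        exact this (funext h)
      choose f hf using hex
      refine Finset.card_le_card_of_injOn (fun i => if h : i ∈ Sᶜ then (i, f i h) else (i, ⟨0, by omega⟩)) ?_ ?_
      · intro i hi
        simp only [hi, dif_pos]
        simp only [hT, Finset.mem_filter, Finset.mem_univ, true_and]
        rw [dif_pos (Finset.mem_coe.mp hi)]
        simpa using hf i (Finset.mem_coe.mp hi)
      · intro a ha b hb hab
        simp only [Finset.mem_coe] at ha hb
        simp only [ha, hb, dif_pos] at hab
        exact congrArg Prod.fst hab
    rw [Finset.sum_const]
    rw [nsmul_eq_mul, min_self]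
    have h1 : (1:ℝ) = (2^(k-1) : ℕ) * (2 / n) := by
      rw [hn]
      push_cast
      have h2 : (2:ℝ)^(k-1) * 2 = 2^k := by
        rw [← pow_succ]; congr 1; omega
      rw [mul_div_assoc', h2, div_self (by positivity)]
    rw [h1]
    apply mul_le_mul_of_nonneg_right
    · exact_mod_cast hTcard
    · positivity
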